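/- Let n ≥ 3 and let G be a simple graph on n vertices with ⌊n²/4⌋ + 1 edges. Suppose v₀ is a vertex of G that lies in every triangle of G, and suppose G has at most n − 3 triangles. Then the graph G − v₀ obtained by deleting v₀ (and all edges incident to it) is bipartite. -/

import Mathlib

open Finset SimpleGraph

variable {V : Type*}

/-- Restriction of a graph to a finite vertex set, as a graph on the same vertex type. -/
def gres (G : SimpleGraph V) (s : Finset V) : SimpleGraph V where
  Adj a b := G.Adj a b ∧ a ∈ s ∧ b ∈ s
  symm := ⟨fun a b h => ⟨h.1.symm, h.2.2, h.2.1⟩⟩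
  loopless := ⟨fun a h => G.loopless.irrefl a h.1⟩

lemma gres_adj (G : SimpleGraph V) (s : Finset V) (a b : V) :
    (gres G s).Adj a b ↔ G.Adj a b ∧ a ∈ s ∧ b ∈ s := Iff.rfl

instance gresDec [DecidableEq V] (G : SimpleGraph V) [DecidableRel G.Adj] (s : Finset V) :
    DecidableRel (gres G s).Adj :=
  fun a b => inferInstanceAs (Decidable (G.Adj a b ∧ a ∈ s ∧ b ∈ s))

lemma gres_le (G : SimpleGraph V) (s : Finset V) : gres G s ≤ G := fun _ _ h => h.1

lemma gres_mono (G : SimpleGraph V) {s t : Finset V} (h : s ⊆ t) : gres G s ≤ gres G t :=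
  fun _ _ hab => ⟨hab.1, h hab.2.1, h hab.2.2⟩

lemma gres_nbr_subset [DecidableEq V] [Fintype V] (G : SimpleGraph V) [DecidableRel G.Adj]
    (s : Finset V) (v : V) : (gres G s).neighborFinset v ⊆ s.erase v := by
  intro x hx
  rw [mem_neighborFinset] at hx
  exact Finset.mem_erase.2 ⟨fun h => (gres G s).loopless.irrefl v (h ▸ hx), hx.2.2⟩

lemma gres_edge_split [DecidableEq V] [Fintype V] (G : SimpleGraph V) [DecidableRel G.Adj]
    (s : Finset V) (v : V) :
    (gres G s).edgeFinset.card
      = (gres G (s.erase v)).edgeFinset.card + (gres G s).degree v := by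
  classical
  have hsub : (gres G s).incidenceFinset v ⊆ (gres G s).edgeFinset := by
    intro e he
    rw [SimpleGraph.mem_incidenceFinset] at he
    exact SimpleGraph.mem_edgeFinset.2 he.1
  have hset : (gres G (s.erase v)).edgeFinset
      = (gres G s).edgeFinset \ (gres G s).incidenceFinset v := by
    ext e
    induction e with
    | _ a b =>
      simp only [Finset.mem_sdiff, SimpleGraph.mem_edgeFinset, SimpleGraph.mem_edgeSet,
        SimpleGraph.mem_incidenceFinset, SimpleGraph.incidenceSet, Set.mem_sep_iff,
        Set.mem_setOf_eq, SimpleGraph.mem_edgeSet, Sym2.mem_iff, gres_adj,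
        Finset.mem_erase]
      constructor
      · rintro ⟨hab, ⟨ha1, ha2⟩, hb1, hb2⟩
        exact ⟨⟨hab, ha2, hb2⟩, by rintro ⟨-, (rfl | rfl)⟩ <;> simp_all⟩
      · rintro ⟨⟨hab, ha, hb⟩, hni⟩
        refine ⟨hab, ⟨?_, ha⟩, ⟨?_, hb⟩⟩ <;> rintro rfl <;>
          exact hni ⟨⟨hab, ha, hb⟩, by simp⟩
  have hdeg : ((gres G s).incidenceFinset v).card = (gres G s).degree v :=
    SimpleGraph.card_incidenceFinset_eq_degree _ _
  have hle := Finset.card_le_card hsub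
  rw [hset, Finset.card_sdiff_of_subset hsub, hdeg]
  omega

lemma not_adj_of_common_nbr [DecidableEq V] {G : SimpleGraph V} (h3 : G.CliqueFree 3) {v x y : V}
    (hx : G.Adj v x) (hy : G.Adj v y) : ¬ G.Adj x y := fun hxy =>
  h3 {v, x, y} (SimpleGraph.is3Clique_triple_iff.2 ⟨hx, hy, hxy⟩)

lemma nat_div4 (x y r : ℕ) (h : x = 4 * y + r) (hr : r < 4) : x / 4 = y := by omega

lemma sq_div4_succ (a : ℕ) : (a + 2) ^ 2 / 4 = a ^ 2 / 4 + a + 1 := by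
  rcases Nat.even_or_odd a with ⟨c, rfl⟩ | ⟨c, rfl⟩
  · rw [nat_div4 ((c + c + 2) ^ 2) (c * c + 2 * c + 1) 0 (by ring) (by norm_num),
      nat_div4 ((c + c) ^ 2) (c * c) 0 (by ring) (by norm_num)]
    ring
  · rw [nat_div4 ((2 * c + 1 + 2) ^ 2) (c * c + 3 * c + 2) 1 (by ring) (by norm_num),
      nat_div4 ((2 * c + 1) ^ 2) (c * c + c) 1 (by ring) (by norm_num)]
    ring

lemma div_quarter_half (b : ℕ) : b ^ 2 / 4 + (b + 1) / 2 = (b + 1) ^ 2 / 4 := by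
  rcases Nat.even_or_odd b with ⟨c, rfl⟩ | ⟨c, rfl⟩
  · rw [nat_div4 ((c + c) ^ 2) (c * c) 0 (by ring) (by norm_num),
      nat_div4 ((c + c + 1) ^ 2) (c * c + c) 1 (by ring) (by norm_num)]
    omega
  · rw [nat_div4 ((2 * c + 1) ^ 2) (c * c + c) 1 (by ring) (by norm_num),
      nat_div4 ((2 * c + 1 + 1) ^ 2) (c * c + 2 * c + 1) 0 (by ring) (by norm_num)]
    omega

lemma mul_le_sq_div4 (a b : ℕ) : a * b ≤ (a + b) ^ 2 / 4 := by
  rw [Nat.le_div_iff_mul_le (by norm_num)]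
  nlinarith [two_mul_le_add_sq a b]

lemma add_le_mul_succ {a b : ℕ} (ha : 1 ≤ a) (hb : 1 ≤ b) : a + b ≤ a * b + 1 := by
  rcases a with _ | a
  · omega
  rcases b with _ | b
  · omega
  have : (a + 1) * (b + 1) = a * b + a + b + 1 := by ring
  rw [this]
  omega

/-- Key lemma: a triangle-free graph (restricted to a `k`-set) that is not 2-colorable has
at most `(k-1)^2/4 + 1` edges. -/
lemma key [Fintype V] [DecidableEq V] (G : SimpleGraph V) [DecidableRel G.Adj] :
    ∀ k (s : Finset V), s.card = k → (gres G s).CliqueFree 3 →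
      ¬ (gres G s).Colorable 2 →
      (gres G s).edgeFinset.card ≤ (k - 1) ^ 2 / 4 + 1 := by
  intro k
  induction k using Nat.strong_induction_on with
  | _ k ih =>
    intro s hs h3 h2
    -- s is nonempty, otherwise the graph is 2-colorable
    have hne : s.Nonempty := by
      rcases s.eq_empty_or_nonempty with rfl | h
      · exact absurd ⟨SimpleGraph.Coloring.mk (fun _ => (0 : Fin 2))
          (fun {a b} hab => absurd hab.2.1 (by simp))⟩ h2
      · exact h
    obtain ⟨v, hv, hvmin⟩ := s.exists_min_image (fun x => (gres G s).degree x) hne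
    have hk1 : 1 ≤ k := hs ▸ Finset.card_pos.2 hne
    set H := gres G s with hH
    set H' := gres G (s.erase v) with hH'
    have hH'le : H' ≤ H := gres_mono G (Finset.erase_subset v s)
    have h3' : H'.CliqueFree 3 := h3.anti hH'le
    have hsplit : H.edgeFinset.card = H'.edgeFinset.card + H.degree v :=
      gres_edge_split G s v
    have hNsub : H.neighborFinset v ⊆ s.erase v := gres_nbr_subset G s v
    have hcard_erase : (s.erase v).card = k - 1 := by
      rw [Finset.card_erase_of_mem hv, hs]
    by_cases hcol : H'.Colorable 2
    · -- Case 1 : H - v is 2-colorable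
      obtain ⟨c⟩ := hcol
      set N := H.neighborFinset v with hN
      set A := (s.erase v).filter (fun x => c x = 0) with hA
      set B := (s.erase v).filter (fun x => c x ≠ 0) with hB
      set NA := N.filter (fun x => c x = 0) with hNA
      set NB := N.filter (fun x => c x ≠ 0) with hNB
      -- if all neighbors of v get the same color, extend the coloring to H
      have hext : ∀ b0 : Fin 2, (∀ x ∈ N, c x ≠ b0) → False := by
        intro b0 hb0
        refine h2 ⟨SimpleGraph.Coloring.mk (Function.update (⇑c) v b0) ?_⟩
        intro x y hxy
        have hxs := hxy.2.1
        have hys := hxy.2.2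
        rcases eq_or_ne x v with hxv | hxv
        · subst hxv
          have hyN : y ∈ N := (mem_neighborFinset H x y).2 hxy
          have hyv : y ≠ x := fun h => H.loopless.irrefl x (h ▸ hxy)
          rw [Function.update_self, Function.update_of_ne hyv]
          exact fun h => hb0 y hyN h.symm
        · rcases eq_or_ne y v with hyv | hyv
          · subst hyv
            have hxN : x ∈ N := (mem_neighborFinset H y x).2 hxy.symm
            rw [Function.update_self, Function.update_of_ne hxv]
            exact hb0 x hxN
          · rw [Function.update_of_ne hxv, Function.update_of_ne hyv]
            refine c.valid ?_
            exact ⟨hxy.1, Finset.mem_erase.2 ⟨hxv, hxs⟩, Finset.mem_erase.2 ⟨hyv, hys⟩⟩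
      have hNAne : NA.Nonempty := by
        rcases Finset.eq_empty_or_nonempty NA with h | h
        · exact absurd (hext 0 (fun x hx hc =>
            Finset.eq_empty_iff_forall_notMem.1 h x (Finset.mem_filter.2 ⟨hx, hc⟩))) (by simp)
        · exact h
      have hNBne : NB.Nonempty := by
        rcases Finset.eq_empty_or_nonempty NB with h | h
        · refine absurd (hext 1 (fun x hx hc => ?_)) (by simp)
          exact Finset.eq_empty_iff_forall_notMem.1 h x
            (Finset.mem_filter.2 ⟨hx, by simp [hc]⟩)
        · exact h
      -- counting edges of H'
      have hNAA : NA ⊆ A := Finset.filter_subset_filter _ hNsub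
      have hNBB : NB ⊆ B := Finset.filter_subset_filter _ hNsub
      have hprodsub : NA ×ˢ NB ⊆ A ×ˢ B := Finset.product_subset_product hNAA hNBB
      have hprodsub' : NB ×ˢ NA ⊆ B ×ˢ A := Finset.product_subset_product hNBB hNAA
      have hP : 2 * H'.edgeFinset.card
          = (Finset.univ.filter (fun p : V × V => H'.Adj p.1 p.2)).card := by
        simpa using SimpleGraph.two_mul_card_edgeFinset (G := H')
      have hPsub : (Finset.univ.filter (fun p : V × V => H'.Adj p.1 p.2))
          ⊆ ((A ×ˢ B) \ (NA ×ˢ NB)) ∪ ((B ×ˢ A) \ (NB ×ˢ NA)) := by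
        rintro ⟨x, y⟩ hp
        rw [Finset.mem_filter] at hp
        have hadj : H'.Adj x y := hp.2
        have hxs : x ∈ s.erase v := hadj.2.1
        have hys : y ∈ s.erase v := hadj.2.2
        have hcxy : c x ≠ c y := c.valid hadj
        have hHadj : H.Adj x y := hH'le hadj
        have hnot : ¬(x ∈ N ∧ y ∈ N) := by
          rintro ⟨hxN, hyN⟩
          exact not_adj_of_common_nbr h3 ((mem_neighborFinset H v x).1 hxN)
            ((mem_neighborFinset H v y).1 hyN) hHadj
        rcases eq_or_ne (c x) 0 with hcx | hcx
        · have hcy : c y ≠ 0 := fun h => hcxy (hcx.trans h.symm)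
          refine Finset.mem_union_left _ (Finset.mem_sdiff.2 ⟨?_, ?_⟩)
          · exact Finset.mem_product.2 ⟨Finset.mem_filter.2 ⟨hxs, hcx⟩,
              Finset.mem_filter.2 ⟨hys, hcy⟩⟩
          · intro hmem
            rw [Finset.mem_product] at hmem
            exact hnot ⟨(Finset.mem_filter.1 hmem.1).1, (Finset.mem_filter.1 hmem.2).1⟩
        · have hcy : c y = 0 := by
            have : ∀ a b : Fin 2, a ≠ b → a ≠ 0 → b = 0 := by decide
            exact this _ _ hcxy hcx
          refine Finset.mem_union_right _ (Finset.mem_sdiff.2 ⟨?_, ?_⟩)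
          · exact Finset.mem_product.2 ⟨Finset.mem_filter.2 ⟨hxs, hcx⟩,
              Finset.mem_filter.2 ⟨hys, by simp [hcy]⟩⟩
          · intro hmem
            rw [Finset.mem_product] at hmem
            exact hnot ⟨(Finset.mem_filter.1 hmem.1).1, (Finset.mem_filter.1 hmem.2).1⟩
      have hnnAB : NA.card * NB.card ≤ A.card * B.card :=
        Nat.mul_le_mul (Finset.card_le_card hNAA) (Finset.card_le_card hNBB)
      have hnnBA : NB.card * NA.card ≤ B.card * A.card :=
        Nat.mul_le_mul (Finset.card_le_card hNBB) (Finset.card_le_card hNAA)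
      have hX : ((A ×ˢ B) \ (NA ×ˢ NB)).card + NA.card * NB.card = A.card * B.card := by
        rw [Finset.card_sdiff_of_subset hprodsub, Finset.card_product, Finset.card_product]
        exact Nat.sub_add_cancel hnnAB
      have hY : ((B ×ˢ A) \ (NB ×ˢ NA)).card + NB.card * NA.card = B.card * A.card := by
        rw [Finset.card_sdiff_of_subset hprodsub', Finset.card_product, Finset.card_product]
        exact Nat.sub_add_cancel hnnBA
      have hPle := Finset.card_le_card hPsub
      have hUle := Finset.card_union_le ((A ×ˢ B) \ (NA ×ˢ NB)) ((B ×ˢ A) \ (NB ×ˢ NA))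
      have hcomm : B.card * A.card = A.card * B.card := Nat.mul_comm _ _
      have hcomm' : NB.card * NA.card = NA.card * NB.card := Nat.mul_comm _ _
      have hE' : H'.edgeFinset.card + NA.card * NB.card ≤ A.card * B.card := by
        omega
      -- degree of v
      have hdeg : H.degree v = NA.card + NB.card := by
        rw [SimpleGraph.degree, ← hN]
        exact (Finset.card_filter_add_card_filter_not (p := fun x => c x = 0)).symm
      have hNA1 : 1 ≤ NA.card := Finset.card_pos.2 hNAne
      have hNB1 : 1 ≤ NB.card := Finset.card_pos.2 hNBne
      have hab1 : NA.card + NB.card ≤ NA.card * NB.card + 1 :=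
        add_le_mul_succ hNA1 hNB1
      have hABcard : A.card + B.card = k - 1 := by
        rw [hA, hB]
        rw [Finset.card_filter_add_card_filter_not (p := fun x => c x = 0)]
        exact hcard_erase
      have hABle : A.card * B.card ≤ (k - 1) ^ 2 / 4 := by
        have := mul_le_sq_div4 A.card B.card
        rwa [hABcard] at this
      rw [hsplit, hdeg]
      linarith [hE', hab1, hABle]
    · -- Case 2 : H - v is not 2-colorable; use induction
      have hIH : H'.edgeFinset.card ≤ (k - 1 - 1) ^ 2 / 4 + 1 :=
        ih (k - 1) (by omega) (s.erase v) hcard_erase h3' hcol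
      -- bound the minimum degree
      have hdlt : H.degree v ≤ (k - 1) / 2 := by
        rcases Nat.eq_zero_or_pos (H.degree v) with h0 | h0
        · omega
        · obtain ⟨u, hu⟩ := Finset.card_pos.1 (by rwa [SimpleGraph.degree] at h0)
          have huadj : H.Adj v u := (mem_neighborFinset H v u).1 hu
          have hus : u ∈ s := huadj.2.2
          have hdisj : Disjoint (H.neighborFinset v) (H.neighborFinset u) := by
            rw [Finset.disjoint_left]
            intro x hx hx'
            exact not_adj_of_common_nbr h3 huadj ((mem_neighborFinset H v x).1 hx)
              ((mem_neighborFinset H u x).1 hx')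
          by_cases hall : ∀ w ∈ s, w ∈ H.neighborFinset v ∪ H.neighborFinset u
          · -- then H is bipartite, contradiction
            exfalso
            refine h2 ⟨SimpleGraph.Coloring.mk
              (fun x => if x ∈ H.neighborFinset v then 0 else 1) ?_⟩
            intro x y hxy
            have hxs : x ∈ s := hxy.2.1
            have hys : y ∈ s := hxy.2.2
            by_cases hxN : x ∈ H.neighborFinset v
            · by_cases hyN : y ∈ H.neighborFinset v
              · exact absurd hxy (not_adj_of_common_nbr h3
                  ((mem_neighborFinset H v x).1 hxN) ((mem_neighborFinset H v y).1 hyN))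
              · simp [hxN, hyN]
            · by_cases hyN : y ∈ H.neighborFinset v
              · simp [hxN, hyN]
              · exfalso
                have hxNu : x ∈ H.neighborFinset u := by
                  rcases Finset.mem_union.1 (hall x hxs) with h | h
                  · exact absurd h hxN
                  · exact h
                have hyNu : y ∈ H.neighborFinset u := by
                  rcases Finset.mem_union.1 (hall y hys) with h | h
                  · exact absurd h hyN
                  · exact h
                exact not_adj_of_common_nbr h3 ((mem_neighborFinset H u x).1 hxNu)
                  ((mem_neighborFinset H u y).1 hyNu) hxy
          · push_neg at hall
            obtain ⟨w, hws, hw⟩ := hall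
            have hsubw : H.neighborFinset v ∪ H.neighborFinset u ⊆ s.erase w := by
              intro x hx
              refine Finset.mem_erase.2 ⟨fun h => hw (h ▸ hx), ?_⟩
              rcases Finset.mem_union.1 hx with h | h
              · exact ((mem_neighborFinset H v x).1 h).2.2
              · exact ((mem_neighborFinset H u x).1 h).2.2
            have hcards : H.degree v + H.degree u ≤ k - 1 := by
              have h1 := Finset.card_le_card hsubw
              rw [Finset.card_union_of_disjoint hdisj] at h1
              rw [Finset.card_erase_of_mem hws, hs] at h1
              exact h1
            have hmin : H.degree v ≤ H.degree u := hvmin u hus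
            rw [Nat.le_div_iff_mul_le (by norm_num)]
            omega
      have hid : (k - 1 - 1) ^ 2 / 4 + (k - 1) / 2 = (k - 1) ^ 2 / 4 := by
        rcases Nat.eq_or_lt_of_le hk1 with h | h
        · simp [← h]
        · have h2k : 2 ≤ k := h
          have := div_quarter_half (k - 2)
          have hk2 : k - 2 + 1 = k - 1 := by omega
          rw [hk2] at this
          have hk3 : k - 1 - 1 = k - 2 := by omega
          rw [hk3]
          exact this
      obtain ⟨p, hp⟩ : ∃ p, (k - 1 - 1) ^ 2 / 4 = p := ⟨_, rfl⟩
      obtain ⟨q, hq⟩ : ∃ q, (k - 1) ^ 2 / 4 = q := ⟨_, rfl⟩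
      rw [hp] at hIH hid
      rw [hq] at hid ⊢
      have hfin : H.edgeFinset.card ≤ q + 1 := by omega
      exact hfin

lemma edge_card_congr [Fintype V] {G₁ G₂ : SimpleGraph V} [DecidableRel G₁.Adj]
    [DecidableRel G₂.Adj] (h : G₁ = G₂) : G₁.edgeFinset.card = G₂.edgeFinset.card := by
  subst h
  congr 1
  ext e
  simp [SimpleGraph.mem_edgeFinset]

/-- If `G` is a graph on `n ≥ 3` vertices with `⌊n²/4⌋ + 1` edges, some vertex `v₀` lies in
every triangle of `G`, and `G` has at most `n − 3` triangles, then `G − v₀` is bipartite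
(i.e. 2-colorable). -/
theorem delete_cover_vertex_bipartite (n : ℕ) (hn : 3 ≤ n)
    (G : SimpleGraph (Fin n)) [DecidableRel G.Adj]
    (hE : G.edgeFinset.card = n ^ 2 / 4 + 1) (v₀ : Fin n)
    (hcov : ∀ t ∈ G.cliqueFinset 3, v₀ ∈ t)
    (hT : (G.cliqueFinset 3).card ≤ n - 3) :
    (G.induce ({v₀}ᶜ : Set (Fin n))).Colorable 2 := by
  classical
  set H := gres G (Finset.univ.erase v₀) with hH
  -- transfer 2-colorability from H to the induced graph
  suffices hcolH : H.Colorable 2 by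
    obtain ⟨c⟩ := hcolH
    refine ⟨SimpleGraph.Coloring.mk (fun x => c x.val) ?_⟩
    rintro ⟨x, hx⟩ ⟨y, hy⟩ hxy
    refine c.valid ?_
    have hx' : x ≠ v₀ := by simpa using hx
    have hy' : y ≠ v₀ := by simpa using hy
    exact ⟨hxy, Finset.mem_erase.2 ⟨hx', Finset.mem_univ x⟩,
      Finset.mem_erase.2 ⟨hy', Finset.mem_univ y⟩⟩
  by_contra h2
  -- H is triangle-free
  have h3 : H.CliqueFree 3 := by
    intro t ht
    have htG : G.IsNClique 3 t := ⟨fun {a} ha {b} hb hab => (ht.1 ha hb hab).1, ht.2⟩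
    have hv₀t : v₀ ∈ t := hcov t ((SimpleGraph.mem_cliqueFinset_iff).2 htG)
    obtain ⟨a, b, c, ⟨hab, hac, hbc, habc⟩⟩ := SimpleGraph.is3Clique_iff.1 ht
    have hmem : ∀ x ∈ t, x ≠ v₀ := by
      intro x hx
      rw [habc] at hx
      rcases Finset.mem_insert.1 hx with rfl | hx
      · exact fun h => by
          have := hab.2.1
          rw [h] at this
          exact absurd this (by simp)
      · rcases Finset.mem_insert.1 hx with rfl | hx
        · exact fun h => by
            have := hab.2.2
            rw [h] at this
            exact absurd this (by simp)
        · rw [Finset.mem_singleton] at hx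
          subst hx
          exact fun h => by
            have := hbc.2.2
            rw [h] at this
            exact absurd this (by simp)
    exact hmem v₀ hv₀t rfl
  -- edge count split
  have hGuniv : gres G Finset.univ = G := by
    ext a b
    simp [gres_adj]
  have hsplit0 : (gres G Finset.univ).edgeFinset.card
      = H.edgeFinset.card + (gres G Finset.univ).degree v₀ :=
    gres_edge_split G Finset.univ v₀
  have hdeg0 : (gres G Finset.univ).degree v₀ = G.degree v₀ := by
    unfold SimpleGraph.degree
    congr 1
    ext x
    simp [mem_neighborFinset, gres_adj]
  have hcardG : (gres G Finset.univ).edgeFinset.card = G.edgeFinset.card :=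
    edge_card_congr hGuniv
  have hsplit : G.edgeFinset.card = H.edgeFinset.card + G.degree v₀ := by
    rw [← hcardG, hsplit0, hdeg0]
  -- apply the key lemma
  have hcard_erase : (Finset.univ.erase v₀).card = n - 1 := by
    rw [Finset.card_erase_of_mem (Finset.mem_univ v₀), Finset.card_univ, Fintype.card_fin]
  have hkey : H.edgeFinset.card ≤ (n - 1 - 1) ^ 2 / 4 + 1 :=
    key G (n - 1) (Finset.univ.erase v₀) hcard_erase h3 h2
  have hkey' : H.edgeFinset.card ≤ (n - 2) ^ 2 / 4 + 1 := by
    have : n - 1 - 1 = n - 2 := by omega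
    rwa [this] at hkey
  -- degree of v₀ is at most n - 1
  have hdle : G.degree v₀ ≤ n - 1 := by
    have h1 : G.neighborFinset v₀ ⊆ Finset.univ.erase v₀ := by
      intro x hx
      exact Finset.mem_erase.2 ⟨fun h => G.loopless.irrefl v₀ (h ▸ (mem_neighborFinset G v₀ x).1 hx),
        Finset.mem_univ x⟩
    have := Finset.card_le_card h1
    rwa [hcard_erase] at this
  have hid : n ^ 2 / 4 = (n - 2) ^ 2 / 4 + (n - 2) + 1 := by
    have := sq_div4_succ (n - 2)
    rwa [Nat.sub_add_cancel (by omega : 2 ≤ n)] at this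
  -- derive that the degree of v₀ is exactly n - 1
  have hdeq : G.degree v₀ = n - 1 := by
    obtain ⟨x, hx⟩ : ∃ x, (n - 2) ^ 2 / 4 = x := ⟨_, rfl⟩
    rw [hid, hx] at hE
    rw [hx] at hkey'
    omega
  -- so v₀ is adjacent to all other vertices
  have hnbr : G.neighborFinset v₀ = Finset.univ.erase v₀ := by
    apply Finset.eq_of_subset_of_card_le
    · intro x hx
      exact Finset.mem_erase.2 ⟨fun h => G.loopless.irrefl v₀ (h ▸ (mem_neighborFinset G v₀ x).1 hx),
        Finset.mem_univ x⟩
    · rw [hcard_erase]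
      rw [SimpleGraph.degree] at hdeq
      omega
  -- every edge of H gives a triangle of G
  have htri : H.edgeFinset.card ≤ (G.cliqueFinset 3).card := by
    apply Finset.card_le_card_of_injOn
      (Sym2.lift ⟨fun a b => insert v₀ {a, b}, fun a b => by
        show insert v₀ {a, b} = insert v₀ {b, a}
        rw [Finset.pair_comm]⟩)
    · intro e he
      induction e with
      | _ a b =>
        rw [Finset.mem_coe, SimpleGraph.mem_edgeFinset, SimpleGraph.mem_edgeSet] at he
        have hva : G.Adj v₀ a := (mem_neighborFinset G v₀ a).1 (hnbr ▸ he.2.1)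
        have hvb : G.Adj v₀ b := (mem_neighborFinset G v₀ b).1 (hnbr ▸ he.2.2)
        rw [Sym2.lift_mk]
        exact (SimpleGraph.mem_cliqueFinset_iff).2
          (SimpleGraph.is3Clique_triple_iff.2 ⟨hva, hvb, he.1⟩)
    · intro e1 he1 e2 he2 hfe
      induction e1 with
      | _ a b =>
        induction e2 with
        | _ c d =>
          rw [Finset.mem_coe, SimpleGraph.mem_edgeFinset, SimpleGraph.mem_edgeSet] at he1 he2
          rw [Sym2.lift_mk, Sym2.lift_mk] at hfe
          change (insert v₀ {a, b} : Finset (Fin n)) = insert v₀ {c, d} at hfe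
          have hav : a ≠ v₀ := (Finset.mem_erase.1 he1.2.1).1
          have hbv : b ≠ v₀ := (Finset.mem_erase.1 he1.2.2).1
          have hcv : c ≠ v₀ := (Finset.mem_erase.1 he2.2.1).1
          have hdv : d ≠ v₀ := (Finset.mem_erase.1 he2.2.2).1
          have hab : a ≠ b := fun h => H.loopless.irrefl a (h ▸ he1)
          have hcd : c ≠ d := fun h => H.loopless.irrefl c (h ▸ he2)
          have ha : a ∈ ({v₀, c, d} : Finset (Fin n)) := hfe ▸ (by simp)
          have hb : b ∈ ({v₀, c, d} : Finset (Fin n)) := hfe ▸ (by simp)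
          simp only [Finset.mem_insert, Finset.mem_singleton] at ha hb
          rw [Sym2.eq_iff]
          rcases ha with rfl | rfl | rfl
          · exact absurd rfl hav
          · rcases hb with rfl | rfl | rfl
            · exact absurd rfl hbv
            · exact absurd rfl hab
            · exact Or.inl ⟨rfl, rfl⟩
          · rcases hb with rfl | rfl | rfl
            · exact absurd rfl hbv
            · exact Or.inr ⟨rfl, rfl⟩
            · exact absurd rfl hab
  -- final contradiction
  have hfin : H.edgeFinset.card ≤ n - 3 := le_trans htri hT
  have hsq : 8 * n ≤ n ^ 2 + 16 := by
    zify
    nlinarith [sq_nonneg ((n : ℤ) - 4)]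
  obtain ⟨q, hq⟩ : ∃ q, n ^ 2 = q := ⟨_, rfl⟩
  rw [hq] at hE hsq
  omega
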